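/- For a fixed positive integer K and compact Ω ⊆ ℝ^p, any continuous function ℓ: Ω^K × Ω → ℝ that is permutation-invariant in its first K arguments admits a sum-decomposable representation: there exist a continuous map τ: ℝ^p → ℝ^{N} with N = C(K+p, p) − 1 and a continuous map ρ: ℝ^N × ℝ^N → ℝ such that ℓ(ζ_1,…,ζ_K, ω) = ρ((1/K)∑_{k=1}^K τ(ζ_k), τ(ω)) for all ζ_1,…,ζ_K ∈ Ω and ω ∈ Ω. -/

import Mathlib

open Finset in
lemma aux_tuple_perm {α : Type*} {K : ℕ} {f g : Fin K → α}
    (h : (↑(List.ofFn f) : Multiset α) = ↑(List.ofFn g)) :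
    ∃ σ : Equiv.Perm (Fin K), f ∘ σ = g := by
  letI : LinearOrder α := IsWellOrder.linearOrder WellOrderingRel
  have h1 : List.Perm (List.ofFn (f ∘ Tuple.sort f)) (List.ofFn (g ∘ Tuple.sort g)) :=
    ((Equiv.Perm.ofFn_comp_perm (Tuple.sort f) f).trans
      (Multiset.coe_eq_coe.mp h)).trans (Equiv.Perm.ofFn_comp_perm (Tuple.sort g) g).symm
  have h2 : List.ofFn (f ∘ Tuple.sort f) = List.ofFn (g ∘ Tuple.sort g) :=
    List.Perm.eq_of_sortedLE (Tuple.monotone_sort f).sortedLE_ofFn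
      (Tuple.monotone_sort g).sortedLE_ofFn h1
  have h3 : f ∘ Tuple.sort f = g ∘ Tuple.sort g := List.ofFn_injective h2
  refine ⟨(Tuple.sort g).symm.trans (Tuple.sort f), ?_⟩
  funext i
  have := congrFun h3 ((Tuple.sort g).symm i)
  simpa using this
lemma aux_multiset_map {α β : Type*} {S : Set α} {π : α → β} (hinj : Set.InjOn π S)
    {A B : Multiset α} (hA : ∀ a ∈ A, a ∈ S) (hB : ∀ a ∈ B, a ∈ S)
    (h : A.map π = B.map π) : A = B := by
  classical
  have key : ∀ (C : Multiset α), (∀ a ∈ C, a ∈ S) → ∀ a ∈ S,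
      Multiset.count (π a) (C.map π) = Multiset.count a C := by
    intro C hC a ha
    rw [Multiset.count_map, Multiset.count_eq_card_filter_eq]
    congr 1
    refine Multiset.filter_congr (fun b hb => ?_)
    exact ⟨fun hh => hinj ha (hC b hb) hh, fun hh => by rw [hh]⟩
  ext a
  by_cases ha : a ∈ S
  · have hc := congrArg (Multiset.count (π a)) h
    rwa [key A hA a ha, key B hB a ha] at hc
  · rw [Multiset.count_eq_zero_of_notMem (fun hm => ha (hA a hm)),
      Multiset.count_eq_zero_of_notMem (fun hm => ha (hB a hm))]
open MvPolynomial Finset in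
lemma aux_newton {K : ℕ} (x y : Fin K → ℝ)
    (h : ∀ k, 1 ≤ k → k ≤ K → ∑ i, x i ^ k = ∑ i, y i ^ k) :
    (↑(List.ofFn x) : Multiset ℝ) = ↑(List.ofFn y) := by
  classical
  have hpsum : ∀ k, 1 ≤ k → k ≤ K →
      aeval x (psum (Fin K) ℝ k) = aeval y (psum (Fin K) ℝ k) := by
    intro k h1 h2
    simp only [psum, map_sum, map_pow, aeval_X]
    exact h k h1 h2
  have hesymm : ∀ k, k ≤ K →
      aeval x (esymm (Fin K) ℝ k) = aeval y (esymm (Fin K) ℝ k) := by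
    intro k
    induction k using Nat.strong_induction_on with
    | _ k ih =>
      intro hkK
      rcases Nat.eq_zero_or_pos k with rfl | hk
      · simp
      · have hx := congrArg (aeval x) (mul_esymm_eq_sum (Fin K) ℝ k)
        have hy := congrArg (aeval y) (mul_esymm_eq_sum (Fin K) ℝ k)
        simp only [map_mul, map_natCast, map_pow, map_neg, map_one, map_sum] at hx hy
        have hsum : ∑ a ∈ (antidiagonal k).filter (fun a => a.1 < k),
              (-1 : ℝ) ^ a.1 * aeval x (esymm (Fin K) ℝ a.1) * aeval x (psum (Fin K) ℝ a.2)
            = ∑ a ∈ (antidiagonal k).filter (fun a => a.1 < k),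
              (-1 : ℝ) ^ a.1 * aeval y (esymm (Fin K) ℝ a.1) * aeval y (psum (Fin K) ℝ a.2) := by
          refine Finset.sum_congr rfl (fun a ha => ?_)
          obtain ⟨hmem, h1⟩ := Finset.mem_filter.mp ha
          have h2 : a.1 + a.2 = k := Finset.HasAntidiagonal.mem_antidiagonal.mp hmem
          have ha2 : 1 ≤ a.2 := by omega
          have ha2' : a.2 ≤ K := by omega
          rw [ih a.1 h1 (by omega), hpsum a.2 ha2 ha2']
        have hx' := hx
        rw [hsum, ← hy] at hx'
        have hKne : (k : ℝ) ≠ 0 := Nat.cast_ne_zero.mpr (by omega)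
        exact mul_left_cancel₀ hKne hx'
  -- transfer to multiset esymm
  have hms : ∀ k, k ≤ K →
      Multiset.esymm (↑(List.ofFn x) : Multiset ℝ) k = Multiset.esymm (↑(List.ofFn y)) k := by
    intro k hk
    have hx := aeval_esymm_eq_multiset_esymm (Fin K) ℝ k x
    have hy := aeval_esymm_eq_multiset_esymm (Fin K) ℝ k y
    rw [Fin.univ_val_map] at hx hy
    rw [← hx, ← hy]
    exact hesymm k hk
  have hcardx : Multiset.card (↑(List.ofFn x) : Multiset ℝ) = K := by simp
  have hcardy : Multiset.card (↑(List.ofFn y) : Multiset ℝ) = K := by simp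
  have hprod : ((↑(List.ofFn x) : Multiset ℝ).map fun t => Polynomial.X - Polynomial.C t).prod
      = ((↑(List.ofFn y) : Multiset ℝ).map fun t => Polynomial.X - Polynomial.C t).prod := by
    rw [Multiset.prod_X_sub_X_eq_sum_esymm, Multiset.prod_X_sub_X_eq_sum_esymm, hcardx, hcardy]
    refine Finset.sum_congr rfl (fun j hj => ?_)
    rw [hms j (by simpa using Nat.lt_succ_iff.mp (Finset.mem_range.mp hj))]
  have := congrArg Polynomial.roots hprod
  rwa [Polynomial.roots_multiset_prod_X_sub_C, Polynomial.roots_multiset_prod_X_sub_C] at this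
open MvPolynomial Finset in
lemma aux_sum_eval {p K : ℕ} (ζ ζ' : Fin K → (Fin p → ℝ))
    (hm : ∀ d : Fin p →₀ ℕ, d ≠ 0 → (d.sum fun _ n => n) ≤ K →
      ∑ i, ∏ j, ζ i j ^ d j = ∑ i, ∏ j, ζ' i j ^ d j)
    (Q : MvPolynomial (Fin p) ℝ) (hQ : Q.totalDegree ≤ K) :
    ∑ i, MvPolynomial.eval (ζ i) Q = ∑ i, MvPolynomial.eval (ζ' i) Q := by
  have swap : ∀ ξ : Fin K → Fin p → ℝ, ∑ i, MvPolynomial.eval (ξ i) Q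
      = ∑ d ∈ Q.support, Q.coeff d * ∑ i, ∏ j, ξ i j ^ d j := by
    intro ξ
    simp only [MvPolynomial.eval_eq']
    rw [Finset.sum_comm]
    exact Finset.sum_congr rfl fun d _ => (Finset.mul_sum _ _ _).symm
  rw [swap ζ, swap ζ']
  refine Finset.sum_congr rfl (fun d hd => ?_)
  rcases eq_or_ne d 0 with rfl | hne
  · simp
  · rw [hm d hne (le_trans (MvPolynomial.le_totalDegree hd) hQ)]

open MvPolynomial Finset in
lemma aux_proj_psum {p K : ℕ} (ζ ζ' : Fin K → (Fin p → ℝ))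
    (hm : ∀ d : Fin p →₀ ℕ, d ≠ 0 → (d.sum fun _ n => n) ≤ K →
      ∑ i, ∏ j, ζ i j ^ d j = ∑ i, ∏ j, ζ' i j ^ d j)
    (v : Fin p → ℝ) (k : ℕ) (hk : k ≤ K) :
    ∑ i, (∑ j, ζ i j * v j) ^ k = ∑ i, (∑ j, ζ' i j * v j) ^ k := by
  have hQd : ((∑ j, (X j * C (v j) : MvPolynomial (Fin p) ℝ)) ^ k).totalDegree ≤ K := by
    refine le_trans (MvPolynomial.totalDegree_pow _ _) ?_
    have h1 : (∑ j, (X j * C (v j) : MvPolynomial (Fin p) ℝ)).totalDegree ≤ 1 := by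
      refine le_trans (MvPolynomial.totalDegree_finset_sum _ _) ?_
      refine Finset.sup_le (fun j _ => ?_)
      refine le_trans (MvPolynomial.totalDegree_mul _ _) ?_
      simp [MvPolynomial.totalDegree_X]
    calc k * (∑ j, (X j * C (v j) : MvPolynomial (Fin p) ℝ)).totalDegree ≤ k * 1 :=
          Nat.mul_le_mul_left k h1
      _ ≤ K := by omega
  have := aux_sum_eval ζ ζ' hm ((∑ j, (X j * C (v j) : MvPolynomial (Fin p) ℝ)) ^ k) hQd
  simpa only [map_pow, map_sum, map_mul, MvPolynomial.eval_X, MvPolynomial.eval_C] using this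

open MvPolynomial Finset in
lemma aux_sep {p : ℕ} (S : Finset (Fin p → ℝ)) :
    ∃ v : Fin p → ℝ, ∀ a ∈ S, ∀ b ∈ S, (∑ j, a j * v j) = (∑ j, b j * v j) → a = b := by
  classical
  set P : MvPolynomial (Fin p) ℝ :=
    ∏ q ∈ S.offDiag, (∑ j, (X j * C (q.1 j - q.2 j)) : MvPolynomial (Fin p) ℝ) with hP
  have hfac : ∀ q ∈ S.offDiag, (∑ j, (X j * C (q.1 j - q.2 j)) : MvPolynomial (Fin p) ℝ) ≠ 0 := by
    intro q hq
    obtain ⟨_, _, hne⟩ := Finset.mem_offDiag.mp hq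
    obtain ⟨j₀, hj₀⟩ : ∃ j₀, q.1 j₀ ≠ q.2 j₀ := by
      by_contra hcon
      push_neg at hcon
      exact hne (funext hcon)
    intro h0
    have := congrArg (MvPolynomial.eval (Pi.single j₀ 1)) h0
    simp only [map_sum, map_mul, MvPolynomial.eval_X, MvPolynomial.eval_C, map_zero] at this
    rw [Finset.sum_eq_single j₀ (fun b _ hb => by simp [Pi.single_eq_of_ne hb])
      (by simp)] at this
    simp at this
    exact hj₀ (sub_eq_zero.mp this)
  have hPne : P ≠ 0 := Finset.prod_ne_zero_iff.mpr hfac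
  obtain ⟨v, hv⟩ : ∃ v : Fin p → ℝ, MvPolynomial.eval v P ≠ 0 := by
    by_contra hcon
    push_neg at hcon
    refine hPne (MvPolynomial.funext (fun w => ?_))
    rw [hcon w, map_zero]
  refine ⟨v, fun a ha b hb heq => ?_⟩
  by_contra hne
  have hq : (a, b) ∈ S.offDiag := Finset.mem_offDiag.mpr ⟨ha, hb, hne⟩
  have hfne : MvPolynomial.eval v (∑ j, (X j * C (a j - b j)) : MvPolynomial (Fin p) ℝ) ≠ 0 := by
    intro h0
    rw [hP, map_prod] at hv
    exact hv (Finset.prod_eq_zero hq h0)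
  apply hfne
  simp only [map_sum, map_mul, MvPolynomial.eval_X, MvPolynomial.eval_C, mul_sub]
  rw [Finset.sum_sub_distrib]
  have h1 : ∑ x, v x * a x = ∑ j, a j * v j := Finset.sum_congr rfl fun _ _ => mul_comm _ _
  have h2 : ∑ x, v x * b x = ∑ j, b j * v j := Finset.sum_congr rfl fun _ _ => mul_comm _ _
  rw [h1, h2, heq, sub_self]
lemma aux_card (p K : ℕ) :
    Nonempty ({d : Fin p →₀ ℕ // (d.sum fun _ n => n) ≤ K ∧ d ≠ 0}
      ↪ Fin ((K + p).choose p - 1)) := by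
  classical
  set D := {d : Fin p →₀ ℕ // (d.sum fun _ n => n) ≤ K ∧ d ≠ 0}
  let jm : D → Multiset (Fin (p + 1)) := fun d =>
    (d.1.toMultiset.map Fin.castSucc) + Multiset.replicate (K - d.1.sum fun _ n => n) (Fin.last p)
  have hcount : ∀ (d : D) (j₀ : Fin p), Multiset.count (Fin.castSucc j₀) (jm d) = d.1 j₀ := by
    intro d j₀
    have hne : Fin.castSucc j₀ ≠ Fin.last p := Fin.ne_of_lt (Fin.castSucc_lt_last j₀)
    simp only [jm, Multiset.count_add, Multiset.count_replicate]
    rw [Multiset.count_map_eq_count' _ _ (Fin.castSucc_injective p), Finsupp.count_toMultiset]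
    simp [hne, Ne.symm hne]
  have hcard : ∀ d : D, Multiset.card (jm d) = K := by
    intro d
    simp only [jm, Multiset.card_add, Multiset.card_map, Multiset.card_replicate,
      Finsupp.card_toMultiset]
    have := d.2.1
    simp only [Finsupp.sum, id_eq] at this ⊢
    omega
  let j : D → Sym (Fin (p + 1)) K := fun d => ⟨jm d, hcard d⟩
  have hj : Function.Injective j := by
    intro d e h
    have h' : jm d = jm e := congrArg Subtype.val h
    refine Subtype.ext (Finsupp.ext fun j₀ => ?_)
    rw [← hcount d j₀, ← hcount e j₀, h']
  haveI : Fintype D := Fintype.ofInjective j hj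
  have hnotmem : (⟨Multiset.replicate K (Fin.last p), Multiset.card_replicate _ _⟩ : Sym (Fin (p+1)) K)
      ∉ Set.range j := by
    rintro ⟨d, hd⟩
    have h' : jm d = Multiset.replicate K (Fin.last p) := congrArg Subtype.val hd
    have : ∀ j₀, d.1 j₀ = 0 := by
      intro j₀
      have hne : Fin.castSucc j₀ ≠ Fin.last p := Fin.ne_of_lt (Fin.castSucc_lt_last j₀)
      rw [← hcount d j₀, h', Multiset.count_replicate, if_neg (Ne.symm hne)]
    exact d.2.2 (Finsupp.ext this)
  have hlt : Fintype.card D < Fintype.card (Sym (Fin (p + 1)) K) :=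
    Fintype.card_lt_of_injective_of_notMem j hj hnotmem
  have hcard2 : Fintype.card (Sym (Fin (p + 1)) K) = (K + p).choose p := by
    rw [Sym.card_sym_eq_multichoose, Fintype.card_fin, Nat.multichoose_eq]
    have h1 : p + 1 + K - 1 = p + K := by omega
    rw [h1, ← Nat.choose_symm (by omega : K ≤ p + K)]
    congr 1 <;> omega
  exact Function.Embedding.nonempty_of_card_le (α := D) (β := Fin ((K + p).choose p - 1))
    (by simp; omega)


open MvPolynomial Finset Topology in
/-- (Sum-decomposable representation of permutation-invariant functions.)
For fixed `K ≥ 1` and compact `Ω ⊆ ℝ^p`, any continuous `ℓ : Ω^K × Ω → ℝ` that is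
permutation-invariant in its first `K` arguments can be written as
`ℓ(ζ₁,…,ζ_K, ω) = ρ((1/K) ∑ₖ τ(ζₖ), τ(ω))` with continuous `τ : ℝ^p → ℝ^N`,
`N = C(K+p, p) − 1`, and continuous `ρ : ℝ^N × ℝ^N → ℝ`. -/
theorem stmt_9 (p K : ℕ) (hK : 0 < K)
    (Ω : Set (EuclideanSpace ℝ (Fin p))) (hΩ : IsCompact Ω)
    (ℓ : (Fin K → EuclideanSpace ℝ (Fin p)) → EuclideanSpace ℝ (Fin p) → ℝ)
    (hcont : ContinuousOn (fun q : (Fin K → EuclideanSpace ℝ (Fin p)) × EuclideanSpace ℝ (Fin p) => ℓ q.1 q.2)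
      ((Set.univ.pi fun _ : Fin K => Ω) ×ˢ Ω))
    (hsym : ∀ σ : Equiv.Perm (Fin K), ∀ ζ : Fin K → EuclideanSpace ℝ (Fin p),
      (∀ i, ζ i ∈ Ω) → ∀ ω ∈ Ω, ℓ (ζ ∘ σ) ω = ℓ ζ ω) :
    ∃ τ : EuclideanSpace ℝ (Fin p) → EuclideanSpace ℝ (Fin ((K + p).choose p - 1)),
    ∃ ρ : EuclideanSpace ℝ (Fin ((K + p).choose p - 1)) →
            EuclideanSpace ℝ (Fin ((K + p).choose p - 1)) → ℝ,
      Continuous τ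
      ∧ Continuous (fun q : EuclideanSpace ℝ (Fin ((K + p).choose p - 1)) ×
            EuclideanSpace ℝ (Fin ((K + p).choose p - 1)) => ρ q.1 q.2)
      ∧ ∀ ζ : Fin K → EuclideanSpace ℝ (Fin p), (∀ i, ζ i ∈ Ω) → ∀ ω ∈ Ω,
          ℓ ζ ω = ρ ((K : ℝ)⁻¹ • ∑ i : Fin K, τ (ζ i)) (τ ω) := by
  classical
  obtain ⟨ι⟩ := aux_card p K
  let ep : EuclideanSpace ℝ (Fin p) ≃ₗ[ℝ] (Fin p → ℝ) := WithLp.linearEquiv 2 ℝ (Fin p → ℝ)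
  let eN : EuclideanSpace ℝ (Fin ((K + p).choose p - 1)) ≃ₗ[ℝ] (Fin ((K + p).choose p - 1) → ℝ) :=
    WithLp.linearEquiv 2 ℝ (Fin ((K + p).choose p - 1) → ℝ)
  let mono : (Fin p →₀ ℕ) → EuclideanSpace ℝ (Fin p) → ℝ := fun d x => ∏ j, (ep x) j ^ d j
  let coordFun : EuclideanSpace ℝ (Fin p) → (Fin ((K + p).choose p - 1) → ℝ) := fun x =>
    Function.extend ι (fun d : {d : Fin p →₀ ℕ // (d.sum fun _ n => n) ≤ K ∧ d ≠ 0} => mono d.1 x)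
      (fun _ => 0)
  let τ : EuclideanSpace ℝ (Fin p) → EuclideanSpace ℝ (Fin ((K + p).choose p - 1)) := fun x =>
    eN.symm (coordFun x)
  -- basic facts about τ
  have hτcoord : ∀ (x : EuclideanSpace ℝ (Fin p))
      (d : {d : Fin p →₀ ℕ // (d.sum fun _ n => n) ≤ K ∧ d ≠ 0}),
      eN (τ x) (ι d) = mono d.1 x := by
    intro x d
    show eN (eN.symm (coordFun x)) (ι d) = mono d.1 x
    rw [LinearEquiv.apply_symm_apply]
    exact Function.Injective.extend_apply ι.injective _ _ d
  have hepcont : Continuous fun x : EuclideanSpace ℝ (Fin p) => ep x :=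
    PiLp.continuous_ofLp 2 (fun _ : Fin p => ℝ)
  have hmonocont : ∀ d : Fin p →₀ ℕ, Continuous (mono d) := by
    intro d
    exact continuous_finset_prod _ fun j _ =>
      (((continuous_apply j).comp hepcont).pow _)
  have hτcont : Continuous τ := by
    refine Continuous.comp (PiLp.continuous_toLp 2 (fun _ : Fin ((K + p).choose p - 1) => ℝ)) ?_
    refine continuous_pi fun i => ?_
    by_cases h : ∃ d : {d : Fin p →₀ ℕ // (d.sum fun _ n => n) ≤ K ∧ d ≠ 0}, ι d = i
    · obtain ⟨d, rfl⟩ := h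
      have hh : (fun x : EuclideanSpace ℝ (Fin p) => coordFun x (ι d)) = mono d.1 := by
        funext x
        exact Function.Injective.extend_apply ι.injective _ _ d
      show Continuous fun x : EuclideanSpace ℝ (Fin p) => coordFun x (ι d)
      rw [hh]
      exact hmonocont d.1
    · have hh : (fun x : EuclideanSpace ℝ (Fin p) => coordFun x i) = fun _ => 0 := by
        funext x
        exact Function.extend_apply' _ _ _ h
      show Continuous fun x : EuclideanSpace ℝ (Fin p) => coordFun x i
      rw [hh]
      exact continuous_const
  -- the compact domain and the map Φ
  have hCpt : IsCompact ((Set.univ.pi fun _ : Fin K => Ω) ×ˢ Ω) :=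
    (isCompact_univ_pi fun _ => hΩ).prod hΩ
  let Φ : (Fin K → EuclideanSpace ℝ (Fin p)) × EuclideanSpace ℝ (Fin p) →
      EuclideanSpace ℝ (Fin ((K + p).choose p - 1)) × EuclideanSpace ℝ (Fin ((K + p).choose p - 1)) :=
    fun q => ((K : ℝ)⁻¹ • ∑ i, τ (q.1 i), τ q.2)
  have hΦ : Continuous Φ := by
    refine Continuous.prodMk ?_ (hτcont.comp continuous_snd)
    exact (continuous_finset_sum _ fun i _ =>
      hτcont.comp ((continuous_apply (A := fun _ : Fin K => EuclideanSpace ℝ (Fin p)) i).comp (continuous_fst (Y := EuclideanSpace ℝ (Fin p))))).const_smul ((K : ℝ)⁻¹)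
  -- fiber constancy
  have hfiber : ∀ a b : (Fin K → EuclideanSpace ℝ (Fin p)) × EuclideanSpace ℝ (Fin p),
      a ∈ (Set.univ.pi fun _ : Fin K => Ω) ×ˢ Ω → b ∈ (Set.univ.pi fun _ : Fin K => Ω) ×ˢ Ω →
      Φ a = Φ b → ℓ a.1 a.2 = ℓ b.1 b.2 := by
    rintro ⟨ζ, ω⟩ ⟨ζ', ω'⟩ ha hb hab
    have hζ : ∀ i, ζ i ∈ Ω := fun i => ha.1 i (Set.mem_univ i)
    have hζ' : ∀ i, ζ' i ∈ Ω := fun i => hb.1 i (Set.mem_univ i)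
    have hω : ω ∈ Ω := ha.2
    have hω' : ω' ∈ Ω := hb.2
    have hfst : (K : ℝ)⁻¹ • ∑ i, τ (ζ i) = (K : ℝ)⁻¹ • ∑ i, τ (ζ' i) :=
      congrArg Prod.fst hab
    have hsnd : τ ω = τ ω' := congrArg Prod.snd hab
    -- moments are equal
    have hmom : ∀ d : {d : Fin p →₀ ℕ // (d.sum fun _ n => n) ≤ K ∧ d ≠ 0},
        (∑ i, mono d.1 (ζ i)) = ∑ i, mono d.1 (ζ' i) := by
      intro d
      have h1 := congrArg eN hfst
      rw [map_smul, map_smul, map_sum, map_sum] at h1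
      have h2 := congrFun h1 (ι d)
      simp only [Pi.smul_apply, Finset.sum_apply, smul_eq_mul] at h2
      simp only [hτcoord] at h2
      exact mul_left_cancel₀ (inv_ne_zero (Nat.cast_ne_zero.mpr hK.ne')) h2
    -- ω = ω'
    have hDsingle : ∀ j : Fin p, ((Finsupp.single j 1).sum fun _ n => n) ≤ K ∧
        Finsupp.single j 1 ≠ 0 := by
      intro j
      refine ⟨?_, fun h0 => one_ne_zero (Finsupp.single_eq_zero.mp h0)⟩
      rw [Finsupp.sum_single_index] <;> omega
    have hmono_single : ∀ (j : Fin p) (x : EuclideanSpace ℝ (Fin p)),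
        mono (Finsupp.single j 1) x = ep x j := by
      intro j x
      show (∏ j', (ep x) j' ^ (Finsupp.single j 1) j') = ep x j
      rw [Finset.prod_eq_single j]
      · simp
      · intro b _ hb
        simp [Finsupp.single_apply, Ne.symm hb]
      · simp
    have homega : ω = ω' := by
      have hco : ∀ j : Fin p, ep ω j = ep ω' j := by
        intro j
        have h1 := congrArg (fun z => eN z (ι ⟨Finsupp.single j 1, hDsingle j⟩)) hsnd
        simp only [hτcoord] at h1
        rwa [hmono_single, hmono_single] at h1
      exact ep.injective (funext hco)
    -- multisets of ζ, ζ' are equal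
    set w : Fin K → Fin p → ℝ := fun i => ep (ζ i) with hw
    set w' : Fin K → Fin p → ℝ := fun i => ep (ζ' i) with hw'
    have hm : ∀ d : Fin p →₀ ℕ, d ≠ 0 → (d.sum fun _ n => n) ≤ K →
        ∑ i, ∏ j, w i j ^ d j = ∑ i, ∏ j, w' i j ^ d j := by
      intro d hne hdeg
      exact hmom ⟨d, hdeg, hne⟩
    obtain ⟨v, hv⟩ := aux_sep (Finset.image w Finset.univ ∪ Finset.image w' Finset.univ)
    set π : (Fin p → ℝ) → ℝ := fun a => ∑ j, a j * v j with hπ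
    have hpsums : ∀ k, 1 ≤ k → k ≤ K →
        ∑ i, (π ∘ w) i ^ k = ∑ i, (π ∘ w') i ^ k := by
      intro k _ hk
      exact aux_proj_psum w w' hm v k hk
    have hproj : (↑(List.ofFn (π ∘ w)) : Multiset ℝ) = ↑(List.ofFn (π ∘ w')) :=
      aux_newton _ _ hpsums
    have hinj : Set.InjOn π ↑(Finset.image w Finset.univ ∪ Finset.image w' Finset.univ) :=
      fun a ha b hb hab => hv a ha b hb hab
    have hmul : (↑(List.ofFn w) : Multiset (Fin p → ℝ)) = ↑(List.ofFn w') := by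
      refine aux_multiset_map hinj ?_ ?_ ?_
      · intro a haa
        obtain ⟨i, rfl⟩ := List.mem_ofFn.mp (by exact_mod_cast haa)
        exact Finset.mem_coe.mpr (Finset.mem_union_left _ (Finset.mem_image_of_mem w (Finset.mem_univ i)))
      · intro a haa
        obtain ⟨i, rfl⟩ := List.mem_ofFn.mp (by exact_mod_cast haa)
        exact Finset.mem_coe.mpr (Finset.mem_union_right _ (Finset.mem_image_of_mem w' (Finset.mem_univ i)))
      · rw [Multiset.map_coe, Multiset.map_coe, List.map_ofFn, List.map_ofFn]
        exact hproj
    have hms : (↑(List.ofFn ζ) : Multiset (EuclideanSpace ℝ (Fin p))) = ↑(List.ofFn ζ') := by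
      have h3 := congrArg (Multiset.map fun a => ep.symm a) hmul
      rw [Multiset.map_coe, Multiset.map_coe, List.map_ofFn, List.map_ofFn] at h3
      have hl : (fun a => ep.symm a) ∘ w = ζ := by
        funext i
        exact ep.symm_apply_apply (ζ i)
      have hr : (fun a => ep.symm a) ∘ w' = ζ' := by
        funext i
        exact ep.symm_apply_apply (ζ' i)
      rwa [hl, hr] at h3
    obtain ⟨σ, hσ⟩ := aux_tuple_perm hms
    calc ℓ ζ ω = ℓ (ζ ∘ σ) ω := (hsym σ ζ hζ ω hω).symm
      _ = ℓ ζ' ω' := by rw [hσ, homega]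
  -- image and quotient
  have hScomp : IsCompact (Φ '' ((Set.univ.pi fun _ : Fin K => Ω) ×ˢ Ω)) := hCpt.image hΦ
  haveI : CompactSpace ↥((Set.univ.pi fun _ : Fin K => Ω) ×ˢ Ω) :=
    isCompact_iff_compactSpace.mp hCpt
  let Φr : ↥((Set.univ.pi fun _ : Fin K => Ω) ×ˢ Ω) →
      ↥(Φ '' ((Set.univ.pi fun _ : Fin K => Ω) ×ˢ Ω)) := fun q => ⟨Φ q, ⟨q.1, q.2, rfl⟩⟩
  have hΦr : Continuous Φr := Continuous.subtype_mk (hΦ.comp continuous_subtype_val) _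
  have hsurj : Function.Surjective Φr := by
    rintro ⟨s, q, hq, rfl⟩
    exact ⟨⟨q, hq⟩, rfl⟩
  have hquot : IsQuotientMap Φr := (hΦr.isClosedMap).isQuotientMap hΦr hsurj
  choose pre hpre hΦpre using
    fun s : ↥(Φ '' ((Set.univ.pi fun _ : Fin K => Ω) ×ˢ Ω)) => (Set.mem_image _ _ _).mp s.2
  let g : ↥(Φ '' ((Set.univ.pi fun _ : Fin K => Ω) ×ˢ Ω)) → ℝ :=
    fun s => ℓ (pre s).1 (pre s).2
  have hkey : ∀ a : (Fin K → EuclideanSpace ℝ (Fin p)) × EuclideanSpace ℝ (Fin p),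
      a ∈ (Set.univ.pi fun _ : Fin K => Ω) ×ˢ Ω →
      ∀ s : ↥(Φ '' ((Set.univ.pi fun _ : Fin K => Ω) ×ˢ Ω)), Φ a = ↑s → g s = ℓ a.1 a.2 := by
    intro a ha s hs
    exact hfiber (pre s) a (hpre s) ha (by rw [hΦpre s, ← hs])
  have hgcont : Continuous g := by
    rw [hquot.continuous_iff]
    have hcomp : (g ∘ Φr) = fun q : ↥((Set.univ.pi fun _ : Fin K => Ω) ×ˢ Ω) =>
        ℓ (q : (Fin K → EuclideanSpace ℝ (Fin p)) × EuclideanSpace ℝ (Fin p)).1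
          (q : (Fin K → EuclideanSpace ℝ (Fin p)) × EuclideanSpace ℝ (Fin p)).2 := by
      funext q
      exact hkey q q.2 (Φr q) rfl
    rw [hcomp]
    exact hcont.restrict
  obtain ⟨G, hG⟩ := ContinuousMap.exists_restrict_eq hScomp.isClosed ⟨g, hgcont⟩
  refine ⟨τ, fun a b => G (a, b), hτcont, ?_, ?_⟩
  · have hGc : Continuous fun q : EuclideanSpace ℝ (Fin ((K + p).choose p - 1)) ×
        EuclideanSpace ℝ (Fin ((K + p).choose p - 1)) => G (q.1, q.2) := by
      simpa using G.continuous
    exact hGc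
  · intro ζ hζ ω hω
    have hmem : ((ζ, ω) : (Fin K → EuclideanSpace ℝ (Fin p)) × EuclideanSpace ℝ (Fin p)) ∈
        (Set.univ.pi fun _ : Fin K => Ω) ×ˢ Ω :=
      ⟨Set.mem_univ_pi.mpr fun i => hζ i, hω⟩
    let s : ↥(Φ '' ((Set.univ.pi fun _ : Fin K => Ω) ×ˢ Ω)) := ⟨Φ (ζ, ω), ⟨(ζ, ω), hmem, rfl⟩⟩
    have h1 : G (Φ (ζ, ω)) = g s := ContinuousMap.congr_fun hG s
    have h2 : g s = ℓ ζ ω := hkey (ζ, ω) hmem s rfl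
    show ℓ ζ ω = G ((K : ℝ)⁻¹ • ∑ i : Fin K, τ (ζ i), τ ω)
    rw [show ((K : ℝ)⁻¹ • ∑ i : Fin K, τ (ζ i), τ ω) = Φ (ζ, ω) from rfl, h1, h2]
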